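/- Let q : {α−1+s : s = 0,…,b+1} → ℝ and let f : [0,∞) → [0,∞) be nondecreasing. Suppose y : T_b → ℝ is nonnegative, not identically zero, and satisfies the discrete fractional boundary value problem Δ^{α}y(t) + q(t+α−1)·f(y(t+α−1)) = 0 for t = 0,…,b+1 with y(α−2) = y(α+b+1) = 0. Set η := max_{s ∈ {0,…,b+1}} y(s+α−1) and M := max_{s ∈ {1,…,b+1}} G(s+α−1,s). Then η ≤ M·f(η)·Σ_{s=0}^{b+1} |q(s+α−1)|. -/

import Mathlib

/-- Falling power `x^[y] = Γ(x+1)/Γ(x-y+1)`; it equals 0 when `x-y+1` is a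
nonpositive integer since `Real.Gamma` vanishes there (and division by zero is zero). -/
noncomputable def fp (x y : ℝ) : ℝ := Real.Gamma (x + 1) / Real.Gamma (x - y + 1)

/-- The Green function `G(t,s)` of the discrete fractional boundary value problem,
for `t ∈ T_b` (a real number) and an integer `s ∈ {0,1,…,b+1}`. -/
noncomputable def G (α : ℝ) (b : ℕ) (t : ℝ) (s : ℕ) : ℝ :=
  if (s : ℝ) ≤ t - α + 1 then
    1 / Real.Gamma α *
      (fp t (α - 1) * fp (α + b - s) (α - 1) / fp (α + b + 1) (α - 1) - fp (t - s - 1) (α - 1))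
  else
    1 / Real.Gamma α * (fp t (α - 1) * fp (α + b - s) (α - 1) / fp (α + b + 1) (α - 1))

/-- A function `y : T_b → ℝ`, `T_b = {α-2+k : k = 0,…,b+3}`, is encoded as `y : ℕ → ℝ`
via `k ↦ y(α-2+k)`.  `fracSum α y k` is the discrete fractional sum
`(Δ^{-(2-α)} y)(t)` of order `2-α ∈ [0,1)` starting at `a = α-2`, evaluated at the
point `t = a + (2-α) + k = k`; when `α = 2` we use the convention `Δ^0 y = y`. -/
noncomputable def fracSum (α : ℝ) (y : ℕ → ℝ) (k : ℕ) : ℝ :=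
  if α = 2 then y k
  else 1 / Real.Gamma (2 - α) *
    ∑ j ∈ Finset.range (k + 1), fp ((k : ℝ) - (j : ℝ) + 1 - α) (1 - α) * y j

/-- The discrete fractional difference `(Δ^α y)(t) = Δ²(Δ^{-(2-α)} y)(t)` at `t ∈ ℕ`,
where `Δ` is the forward difference. -/
noncomputable def fracDiff (α : ℝ) (y : ℕ → ℝ) (t : ℕ) : ℝ :=
  fracSum α y (t + 2) - 2 * fracSum α y (t + 1) + fracSum α y t



noncomputable def gg (α : ℝ) : ℕ → ℝ
  | 0 => 1
  | m+1 => gg α m * ((m : ℝ) - α) / (m+1)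

noncomputable def aa (α : ℝ) : ℕ → ℝ
  | 0 => 1
  | m+1 => aa α m * ((m : ℝ) + 1 - α) / (m+1)

noncomputable def cc (α : ℝ) : ℕ → ℝ
  | 0 => 1
  | m+1 => cc α m * ((m : ℝ) + 2 - α) / (m+1)

noncomputable def ww (α : ℝ) : ℕ → ℝ
  | 0 => 1
  | j+1 => ww α j * (α + (j : ℝ)) / (j+1)

noncomputable def vv (α : ℝ) : ℕ → ℝ
  | 0 => 0
  | j+1 => Real.Gamma α * ww α j

noncomputable def conv (f z : ℕ → ℝ) (n : ℕ) : ℝ :=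
  ∑ j ∈ Finset.range (n+1), f (n - j) * z j

variable {α : ℝ}

lemma gg_rec (m : ℕ) : gg α (m+1) * ((m:ℝ)+1) = gg α m * ((m:ℝ) - α) := by
  show gg α m * ((m : ℝ) - α) / (m+1) * ((m:ℝ)+1) = _
  have : ((m:ℝ)+1) ≠ 0 := by positivity
  field_simp

lemma aa_rec (m : ℕ) : aa α (m+1) * ((m:ℝ)+1) = aa α m * ((m:ℝ) + 1 - α) := by
  show aa α m * ((m : ℝ) + 1 - α) / (m+1) * ((m:ℝ)+1) = _
  have : ((m:ℝ)+1) ≠ 0 := by positivity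
  field_simp

lemma cc_rec (m : ℕ) : cc α (m+1) * ((m:ℝ)+1) = cc α m * ((m:ℝ) + 2 - α) := by
  show cc α m * ((m : ℝ) + 2 - α) / (m+1) * ((m:ℝ)+1) = _
  have : ((m:ℝ)+1) ≠ 0 := by positivity
  field_simp

lemma ww_rec (j : ℕ) : ww α (j+1) * ((j:ℝ)+1) = ww α j * (α + (j:ℝ)) := by
  show ww α j * (α + (j : ℝ)) / (j+1) * ((j:ℝ)+1) = _
  have : ((j:ℝ)+1) ≠ 0 := by positivity
  field_simp

lemma aa_pascal (m : ℕ) : aa α (m+1) = aa α m + gg α (m+1) := by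
  induction m with
  | zero => norm_num [aa, gg]; ring
  | succ m ih =>
    have A2 := aa_rec (α := α) (m+1)
    have G2 := gg_rec (α := α) (m+1)
    have A1 := aa_rec (α := α) m
    push_cast at A2 G2
    have h2 : ((m:ℝ)+2) ≠ 0 := by positivity
    apply mul_right_cancel₀ h2
    linear_combination A2 - G2 + ((m:ℝ)+1-α) * ih - A1

lemma cc_pascal (m : ℕ) : cc α (m+1) = cc α m + aa α (m+1) := by
  induction m with
  | zero => norm_num [aa, cc]; ring
  | succ m ih =>
    have C2 := cc_rec (α := α) (m+1)
    have A2 := aa_rec (α := α) (m+1)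
    have C1 := cc_rec (α := α) m
    push_cast at C2 A2
    have h2 : ((m:ℝ)+2) ≠ 0 := by positivity
    apply mul_right_cancel₀ h2
    linear_combination C2 - A2 + ((m:ℝ)+2-α) * ih - C1

lemma conv_gw_step (k : ℕ) :
    ((k:ℝ)+1) * conv (gg α) (ww α) (k+1) = (k:ℝ) * conv (gg α) (ww α) k := by
  have hA : ∀ j ∈ Finset.range (k+2), ((k:ℝ)+1) * (gg α (k+1-j) * ww α j)
      = ((k+1-j : ℕ) : ℝ) * gg α (k+1-j) * ww α j + (j:ℝ) * (gg α (k+1-j) * ww α j) := by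
    intro j hj
    rw [Finset.mem_range] at hj
    have : ((k+1-j : ℕ) : ℝ) = (k:ℝ) + 1 - j := by
      rw [Nat.cast_sub (by omega)]; push_cast; ring
    rw [this]; ring
  unfold conv
  rw [Finset.mul_sum, Finset.sum_congr rfl hA, Finset.sum_add_distrib]
  have hA2 : ∑ j ∈ Finset.range (k+2), ((k+1-j : ℕ) : ℝ) * gg α (k+1-j) * ww α j
      = ∑ j ∈ Finset.range (k+1), (((k-j : ℕ):ℝ) - α) * (gg α (k-j) * ww α j) := by
    rw [Finset.sum_range_succ]
    simp only [Nat.sub_self, Nat.cast_zero, zero_mul]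
    rw [add_zero]
    refine Finset.sum_congr rfl fun j hj => ?_
    rw [Finset.mem_range] at hj
    have h1 : k + 1 - j = (k - j) + 1 := by omega
    rw [h1]
    push_cast
    linear_combination (ww α j) * gg_rec (α := α) (k - j)
  have hB : ∑ j ∈ Finset.range (k+2), (j:ℝ) * (gg α (k+1-j) * ww α j)
      = ∑ j ∈ Finset.range (k+1), (α + (j:ℝ)) * (gg α (k-j) * ww α j) := by
    rw [Finset.sum_range_succ']
    simp only [Nat.cast_zero, zero_mul, add_zero]
    refine Finset.sum_congr rfl fun j hj => ?_
    have h1 : k + 1 - (j + 1) = k - j := by omega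
    rw [h1]
    push_cast
    linear_combination (gg α (k - j)) * ww_rec (α := α) j
  rw [hA2, hB, ← Finset.sum_add_distrib, Finset.mul_sum]
  refine Finset.sum_congr rfl fun j hj => ?_
  rw [Finset.mem_range] at hj
  have : ((k-j : ℕ) : ℝ) = (k:ℝ) - j := by rw [Nat.cast_sub (by omega)]
  rw [this]; ring

lemma conv_gw (k : ℕ) : conv (gg α) (ww α) k = if k = 0 then 1 else 0 := by
  induction k with
  | zero => simp [conv, gg, ww]
  | succ k ih =>
    have := conv_gw_step (α := α) k
    have hk1 : ((k:ℝ)+1) ≠ 0 := by positivity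
    rcases Nat.eq_zero_or_pos k with hk | hk
    · subst hk
      simp only [Nat.cast_zero, zero_mul] at this
      have : conv (gg α) (ww α) 1 = 0 := by
        field_simp at this; linarith [this]
      simp [this]
    · have h0 : conv (gg α) (ww α) k = 0 := by
        rw [ih]; simp [Nat.pos_iff_ne_zero.mp hk]
      rw [h0, mul_zero] at this
      have h2 : conv (gg α) (ww α) (k+1) = 0 := by
        have := mul_eq_zero.mp this
        tauto
      rw [h2]
      simp

lemma conv_partial (F A w : ℕ → ℝ) (h0 : F 0 = A 0)
    (hstep : ∀ m : ℕ, F (m+1) = F m + A (m+1)) (n : ℕ) :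
    conv F w n = ∑ p ∈ Finset.range (n+1), conv A w p := by
  induction n with
  | zero => simp [conv, h0]
  | succ n ih =>
    rw [Finset.sum_range_succ, ← ih]
    unfold conv
    rw [Finset.sum_range_succ (n := n+1)]
    have hc : ∀ j ∈ Finset.range (n+1), F (n+1-j) * w j
        = F (n-j) * w j + A (n+1-j) * w j := by
      intro j hj
      rw [Finset.mem_range] at hj
      have h1 : n + 1 - j = (n - j) + 1 := by omega
      rw [h1, hstep (n-j), ← h1]; ring
    rw [Finset.sum_congr rfl hc, Finset.sum_add_distrib]
    rw [Finset.sum_range_succ (f := fun j => A (n+1-j) * w j) (n := n+1)]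
    simp only [Nat.sub_self, h0]
    ring

lemma conv_aw (n : ℕ) : conv (aa α) (ww α) n = 1 := by
  rw [conv_partial (aa α) (gg α) (ww α) rfl aa_pascal]
  have : ∀ p ∈ Finset.range (n+1), conv (gg α) (ww α) p = if p = 0 then 1 else 0 :=
    fun p _ => conv_gw p
  rw [Finset.sum_congr rfl this, Finset.sum_ite_eq' (Finset.range (n+1)) 0 (fun _ => (1:ℝ))]
  simp

lemma conv_cw (n : ℕ) : conv (cc α) (ww α) n = (n:ℝ) + 1 := by
  rw [conv_partial (cc α) (aa α) (ww α) rfl cc_pascal]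
  have : ∀ p ∈ Finset.range (n+1), conv (aa α) (ww α) p = 1 := fun p _ => conv_aw p
  rw [Finset.sum_congr rfl this]
  simp

lemma conv_cv (k : ℕ) : conv (cc α) (vv α) k = Real.Gamma α * k := by
  cases k with
  | zero => simp [conv, vv]
  | succ k =>
    unfold conv
    rw [Finset.sum_range_succ']
    have hc : ∀ j ∈ Finset.range (k+1), cc α (k+1-(j+1)) * vv α (j+1)
        = Real.Gamma α * (cc α (k-j) * ww α j) := by
      intro j hj
      have h1 : k + 1 - (j + 1) = k - j := by omega
      rw [h1]
      show cc α (k-j) * (Real.Gamma α * ww α j) = _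
      ring
    rw [Finset.sum_congr rfl hc]
    show _ + cc α (k+1-0) * vv α 0 = _
    rw [show vv α 0 = 0 from rfl, mul_zero, add_zero, ← Finset.mul_sum]
    rw [show (∑ j ∈ Finset.range (k+1), cc α (k-j) * ww α j) = conv (cc α) (ww α) k from rfl]
    rw [conv_cw]
    push_cast; ring

lemma conv_shift (f z : ℕ → ℝ) (hz : z 0 = 0) (m : ℕ) :
    conv f (fun j => z (j - 1)) m = conv f z (m - 1) := by
  cases m with
  | zero => simp [conv, hz]
  | succ m =>
    unfold conv
    rw [Finset.sum_range_succ']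
    simp only [Nat.zero_sub, hz, mul_zero, add_zero, Nat.succ_sub_succ,
      Nat.add_sub_cancel, Nat.sub_zero]

lemma conv_shift_iter (f : ℕ → ℝ) (d : ℕ) :
    ∀ (z : ℕ → ℝ), z 0 = 0 → ∀ m, conv f (fun j => z (j - d)) m = conv f z (m - d) := by
  induction d with
  | zero => intro z hz m; simp [conv]
  | succ d ih =>
    intro z hz m
    have h1 : (fun j => z (j - (d+1))) = (fun j => (fun i => z (i - 1)) (j - d)) := by
      funext j; rfl
    rw [h1, ih (fun i => z (i - 1)) (by simpa using hz) m, conv_shift f z hz (m - d),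
      Nat.sub_sub]

section gamma
variable (hα1 : 1 < α) (hα2 : α ≤ 2)
include hα1

lemma ww_pos (j : ℕ) : 0 < ww α j := by
  induction j with
  | zero => norm_num [ww]
  | succ j ih =>
    show 0 < ww α j * (α + (j : ℝ)) / (j+1)
    have h1 : (0:ℝ) < α + j := by
      have : (0:ℝ) ≤ j := Nat.cast_nonneg j
      linarith
    positivity

lemma ww_gamma (j : ℕ) : Real.Gamma α * ww α j = Real.Gamma (α + j) / (j.factorial : ℝ) := by
  induction j with
  | zero => simp [ww]
  | succ j ih =>
    have hne : α + (j:ℝ) ≠ 0 := by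
      have : (0:ℝ) ≤ j := Nat.cast_nonneg j
      intro h; linarith
    have hG : Real.Gamma (α + ((j:ℕ)+1:ℕ)) = (α + j) * Real.Gamma (α + j) := by
      push_cast
      rw [show α + ((j:ℝ) + 1) = (α + j) + 1 by ring, Real.Gamma_add_one hne]
    have hfac : (((j:ℕ)+1).factorial : ℝ) = ((j:ℝ)+1) * (j.factorial : ℝ) := by
      rw [Nat.factorial_succ]; push_cast; ring
    have hj1 : ((j:ℝ)+1) ≠ 0 := by positivity
    have hjf : ((j.factorial : ℝ)) ≠ 0 := by positivity
    show Real.Gamma α * (ww α j * (α + (j : ℝ)) / (j+1)) = _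
    rw [hG, hfac]
    calc Real.Gamma α * (ww α j * (α + (j:ℝ)) / ((j:ℝ)+1))
        = (Real.Gamma α * ww α j) * (α + (j:ℝ)) / ((j:ℝ)+1) := by ring
      _ = (Real.Gamma (α + (j:ℝ)) / (j.factorial:ℝ)) * (α + (j:ℝ)) / ((j:ℝ)+1) := by rw [ih]
      _ = (α + (j:ℝ)) * Real.Gamma (α + (j:ℝ)) / (((j:ℝ)+1) * (j.factorial:ℝ)) := by
          field_simp

lemma vv_pos (j : ℕ) : 0 < vv α (j+1) := by
  have h1 : 0 < Real.Gamma α := Real.Gamma_pos_of_pos (by linarith)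
  have := ww_pos hα1 (α := α) j
  show 0 < Real.Gamma α * ww α j
  positivity

lemma vv_nonneg (j : ℕ) : 0 ≤ vv α j := by
  cases j with
  | zero => norm_num [vv]
  | succ j => exact le_of_lt (vv_pos hα1 j)

lemma vv_eq_fp (j : ℕ) : vv α j = fp (α - 2 + j) (α - 1) := by
  cases j with
  | zero =>
    rw [Nat.cast_zero]
    show (0:ℝ) = Real.Gamma (α - 2 + 0 + 1) / Real.Gamma (α - 2 + 0 - (α-1) + 1)
    rw [show α - 2 + (0:ℝ) - (α-1) + 1 = 0 by ring, Real.Gamma_zero, div_zero]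
  | succ j =>
    show Real.Gamma α * ww α j
      = Real.Gamma (α - 2 + ((j:ℕ)+1:ℕ) + 1) / Real.Gamma (α - 2 + ((j:ℕ)+1:ℕ) - (α-1) + 1)
    rw [ww_gamma hα1]
    have h1 : α - 2 + (((j:ℕ)+1:ℕ):ℝ) + 1 = α + j := by push_cast; ring
    have h2 : α - 2 + (((j:ℕ)+1:ℕ):ℝ) - (α-1) + 1 = ((j:ℝ) + 1) := by push_cast; ring
    rw [h1, h2]
    rw [show ((j:ℝ) + 1) = (((j:ℕ):ℝ) + 1) from rfl, Real.Gamma_nat_eq_factorial j]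

omit hα1 in
lemma vv_one : vv α 1 = Real.Gamma α := by
  show Real.Gamma α * ww α 0 = Real.Gamma α
  simp [ww]

end gamma


lemma cc_two (m : ℕ) : cc 2 m = if m = 0 then 1 else 0 := by
  induction m with
  | zero => simp [cc]
  | succ m ih =>
    show cc 2 m * ((m:ℝ) + 2 - 2) / (m+1) = _
    rcases Nat.eq_zero_or_pos m with hm | hm
    · subst hm; norm_num
    · rw [if_neg (by omega)]
      rw [ih, if_neg (by omega)]
      norm_num

section gammacc
variable (hα1 : 1 < α) (hα2 : α ≤ 2) (hα3 : α ≠ 2)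
include hα1 hα2 hα3

omit hα1 in
lemma Gamma2sub_pos : 0 < Real.Gamma (2 - α) :=
  Real.Gamma_pos_of_pos (by cases lt_or_eq_of_le hα2 with
    | inl h => linarith
    | inr h => exact absurd h hα3)

lemma cc_gamma (m : ℕ) :
    cc α m = Real.Gamma ((m:ℝ) + 2 - α) / (Real.Gamma (2 - α) * (m.factorial : ℝ)) := by
  have hG2 := Gamma2sub_pos hα2 hα3
  induction m with
  | zero =>
    simp only [Nat.cast_zero, Nat.factorial_zero, Nat.cast_one, mul_one]
    rw [show (0:ℝ) + 2 - α = 2 - α by ring, show cc α 0 = 1 from rfl]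
    field_simp
  | succ m ih =>
    have hne : (m:ℝ) + 2 - α ≠ 0 := by
      have : (0:ℝ) ≤ m := Nat.cast_nonneg m
      rcases Nat.eq_zero_or_pos m with hm | hm
      · subst hm
        simp only [Nat.cast_zero]
        intro h
        exact hα3 (by linarith)
      · have : (1:ℝ) ≤ m := by exact_mod_cast hm
        intro h; linarith
    have hGstep : Real.Gamma (((m:ℕ)+1:ℕ) + 2 - α) = ((m:ℝ) + 2 - α) * Real.Gamma ((m:ℝ) + 2 - α) := by
      push_cast
      rw [show (m:ℝ) + 1 + 2 - α = ((m:ℝ) + 2 - α) + 1 by ring, Real.Gamma_add_one hne]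
    have hfac : ((((m:ℕ)+1:ℕ)).factorial : ℝ) = ((m:ℝ)+1) * (m.factorial : ℝ) := by
      rw [Nat.factorial_succ]; push_cast; ring
    show cc α m * ((m:ℝ) + 2 - α) / ((m:ℝ)+1) = _
    rw [hGstep, hfac, ih]
    have h1 : ((m:ℝ)+1) ≠ 0 := by positivity
    have h2 : (m.factorial : ℝ) ≠ 0 := by positivity
    field_simp
    try ring

lemma fracSum_eq_conv_ne (y : ℕ → ℝ) (k : ℕ) : fracSum α y k = conv (cc α) y k := by
  have hG2 := Gamma2sub_pos hα2 hα3
  unfold fracSum conv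
  rw [if_neg hα3]
  rw [Finset.mul_sum]
  refine Finset.sum_congr rfl fun j hj => ?_
  rw [Finset.mem_range] at hj
  have hjk : j ≤ k := by omega
  have hcast : (k:ℝ) - (j:ℝ) = ((k - j : ℕ) : ℝ) := by
    rw [Nat.cast_sub hjk]
  rw [hcast, cc_gamma hα1 hα2 hα3 (k - j)]
  unfold fp
  have h1 : ((k-j:ℕ):ℝ) + 1 - α + 1 = ((k-j:ℕ):ℝ) + 2 - α := by ring
  have h2 : ((k-j:ℕ):ℝ) + 1 - α - (1 - α) + 1 = ((k-j:ℕ):ℝ) + 1 := by ring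
  rw [h1, h2]
  rw [show (((k-j:ℕ)):ℝ) + 1 = (((k-j:ℕ)):ℝ) + 1 from rfl, Real.Gamma_nat_eq_factorial (k-j)]
  have h3 : ((k-j).factorial : ℝ) ≠ 0 := by positivity
  field_simp
  try ring

end gammacc

lemma fracSum_eq_conv (hα1 : 1 < α) (hα2 : α ≤ 2) (y : ℕ → ℝ) (k : ℕ) :
    fracSum α y k = conv (cc α) y k := by
  by_cases hα3 : α = 2
  · subst hα3
    unfold fracSum
    rw [if_pos rfl]
    unfold conv
    have hc : ∀ j ∈ Finset.range (k+1), cc 2 (k - j) * y j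
        = (if j = k then y j else 0) := by
      intro j hj
      rw [Finset.mem_range] at hj
      rw [cc_two]
      by_cases h : j = k
      · subst h; simp
      · rw [if_neg (by omega), if_neg h]; ring
    rw [Finset.sum_congr rfl hc, Finset.sum_ite_eq' (Finset.range (k+1)) k y]
    simp
  · exact fracSum_eq_conv_ne hα1 hα2 hα3 y k

section main
variable (hα1 : 1 < α) (hα2 : α ≤ 2)

lemma fracSum_linear (p r : ℝ) (u z : ℕ → ℝ) (n : ℕ) :
    fracSum α (fun k => p * u k + r * z k) n
      = p * fracSum α u n + r * fracSum α z n := by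
  unfold fracSum
  split_ifs with h
  · ring
  · have hc : ∀ j ∈ Finset.range (n+1),
        fp ((n : ℝ) - (j : ℝ) + 1 - α) (1 - α) * (p * u j + r * z j)
        = p * (fp ((n : ℝ) - (j : ℝ) + 1 - α) (1 - α) * u j)
          + r * (fp ((n : ℝ) - (j : ℝ) + 1 - α) (1 - α) * z j) := by
      intro j _; ring
    rw [Finset.sum_congr rfl hc, Finset.sum_add_distrib, ← Finset.mul_sum, ← Finset.mul_sum]
    ring

lemma fracSum_finsum {ι : Type*} (S : Finset ι) (F : ι → ℕ → ℝ) (n : ℕ) :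
    fracSum α (fun k => ∑ s ∈ S, F s k) n = ∑ s ∈ S, fracSum α (F s) n := by
  unfold fracSum
  split_ifs with h
  · rfl
  · simp only [Finset.mul_sum]
    exact Finset.sum_comm

lemma fracDiff_linear (p r : ℝ) (u z : ℕ → ℝ) (t : ℕ) :
    fracDiff α (fun k => p * u k + r * z k) t
      = p * fracDiff α u t + r * fracDiff α z t := by
  unfold fracDiff
  rw [fracSum_linear, fracSum_linear, fracSum_linear]
  ring

lemma fracDiff_finsum {ι : Type*} (S : Finset ι) (F : ι → ℕ → ℝ) (t : ℕ) :
    fracDiff α (fun k => ∑ s ∈ S, F s k) t = ∑ s ∈ S, fracDiff α (F s) t := by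
  unfold fracDiff
  rw [fracSum_finsum, fracSum_finsum, fracSum_finsum, Finset.mul_sum,
    ← Finset.sum_sub_distrib, ← Finset.sum_add_distrib]

include hα1 hα2

lemma fracSum_vv (k : ℕ) : fracSum α (vv α) k = Real.Gamma α * k := by
  rw [fracSum_eq_conv hα1 hα2, conv_cv]

lemma fracDiff_vv (t : ℕ) : fracDiff α (vv α) t = 0 := by
  unfold fracDiff
  rw [fracSum_vv hα1 hα2, fracSum_vv hα1 hα2, fracSum_vv hα1 hα2]
  push_cast
  ring

lemma fracSum_ramp (s k : ℕ) :
    fracSum α (fun j => vv α (j - (s+1))) k = Real.Gamma α * ((k - (s+1) : ℕ) : ℝ) := by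
  rw [fracSum_eq_conv hα1 hα2, conv_shift_iter (cc α) (s+1) (vv α) rfl k, conv_cv]

lemma fracDiff_ramp (s t : ℕ) :
    fracDiff α (fun j => vv α (j - (s+1))) t = if t = s then Real.Gamma α else 0 := by
  unfold fracDiff
  rw [fracSum_ramp hα1 hα2, fracSum_ramp hα1 hα2, fracSum_ramp hα1 hα2]
  rcases Nat.lt_trichotomy t s with h | h | h
  · rw [if_neg (by omega)]
    rw [show t + 2 - (s+1) = 0 by omega, show t + 1 - (s+1) = 0 by omega,
      show t - (s+1) = 0 by omega]
    norm_num
  · subst h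
    rw [if_pos rfl]
    rw [show t + 2 - (t+1) = 1 by omega, show t + 1 - (t+1) = 0 by omega,
      show t - (t+1) = 0 by omega]
    norm_num
  · rw [if_neg (by omega)]
    rw [show t + 2 - (s+1) = (t - s) + 1 by omega, show t + 1 - (s+1) = t - s by omega,
      show t - (s+1) = (t - s) - 1 by omega]
    have h1 : (((t-s) - 1 : ℕ) : ℝ) = ((t - s : ℕ) : ℝ) - 1 := by
      rw [Nat.cast_sub (by omega)]; norm_num
    push_cast [h1]
    ring

lemma fracDiff_zero_prefix (D : ℕ → ℝ) (t : ℕ) (h : ∀ j, j ≤ t+1 → D j = 0) :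
    fracDiff α D t = D (t+2) := by
  unfold fracDiff
  rw [fracSum_eq_conv hα1 hα2, fracSum_eq_conv hα1 hα2, fracSum_eq_conv hα1 hα2]
  have c1 : conv (cc α) D t = 0 := by
    apply Finset.sum_eq_zero
    intro j hj
    rw [Finset.mem_range] at hj
    rw [h j (by omega), mul_zero]
  have c2 : conv (cc α) D (t+1) = 0 := by
    apply Finset.sum_eq_zero
    intro j hj
    rw [Finset.mem_range] at hj
    rw [h j (by omega), mul_zero]
  have c3 : conv (cc α) D (t+2) = D (t+2) := by
    unfold conv
    rw [Finset.sum_eq_single (t+2)]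
    · rw [Nat.sub_self, show cc α 0 = 1 from rfl, one_mul]
    · intro j hj hne
      rw [Finset.mem_range] at hj
      rw [h j (by omega), mul_zero]
    · intro h'
      exact absurd (Finset.self_mem_range_succ (t+2)) h'
  rw [c1, c2, c3]
  ring

lemma homog_sol (u : ℕ → ℝ) (N : ℕ) (h0 : u 0 = 0)
    (hd : ∀ t, t + 2 ≤ N → fracDiff α u t = 0) :
    ∀ k, k ≤ N → u k = (u 1 / Real.Gamma α) * vv α k := by
  have hΓ : Real.Gamma α ≠ 0 := ne_of_gt (Real.Gamma_pos_of_pos (by linarith))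
  intro k
  induction k using Nat.strong_induction_on with
  | _ k ih =>
    intro hk
    match k, hk with
    | 0, _ => rw [h0, show vv α 0 = 0 from rfl, mul_zero]
    | 1, _ => rw [vv_one]; field_simp
    | (t+2), hk =>
      set c := u 1 / Real.Gamma α with hc
      have hD : ∀ j, j ≤ t+1 → u j - c * vv α j = 0 := by
        intro j hj
        rw [ih j (by omega) (by omega)]
        ring
      have hlin := fracDiff_linear (α := α) 1 (-c) u (vv α) t
      have hdz := hd t hk
      have hvz := fracDiff_vv hα1 hα2 t
      have hpre := fracDiff_zero_prefix hα1 hα2 (fun j => 1 * u j + (-c) * vv α j) t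
        (by intro j hj; have := hD j hj; linarith)
      rw [hlin, hdz, hvz] at hpre
      linarith [hpre]

end main

noncomputable def Gj (α : ℝ) (b s k : ℕ) : ℝ :=
  (1/Real.Gamma α) * (vv α k * (vv α (b+2-s) / vv α (b+3)) - vv α (k - (s+1)))

section green
variable {b : ℕ} (hα1 : 1 < α) (hα2 : α ≤ 2)
include hα1

lemma ww_succ_ge (j : ℕ) : ww α j ≤ ww α (j+1) := by
  have hp := ww_pos hα1 (α := α) j
  have h1 : (0:ℝ) < (j:ℝ) + 1 := by positivity
  show ww α j ≤ ww α j * (α + (j:ℝ)) / ((j:ℝ)+1)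
  rw [le_div_iff₀ h1]
  nlinarith

lemma ww_mono {i j : ℕ} (h : i ≤ j) : ww α i ≤ ww α j := by
  induction j with
  | zero => rw [Nat.le_zero.mp h]
  | succ j ih =>
    rcases Nat.lt_or_ge i (j+1) with h' | h'
    · exact le_trans (ih (by omega)) (ww_succ_ge hα1 j)
    · rw [show i = j+1 by omega]

lemma vv_mono {i j : ℕ} (h : i ≤ j) : vv α i ≤ vv α j := by
  cases i with
  | zero => exact (show vv α 0 = 0 from rfl) ▸ vv_nonneg hα1 j
  | succ i =>
    cases j with
    | zero => omega
    | succ j =>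
      show Real.Gamma α * ww α i ≤ Real.Gamma α * ww α j
      have hΓ : 0 < Real.Gamma α := Real.Gamma_pos_of_pos (by linarith)
      exact mul_le_mul_of_nonneg_left (ww_mono hα1 (by omega)) (le_of_lt hΓ)

lemma vv_diff (n : ℕ) :
    vv α (n+2) - vv α (n+1) = Real.Gamma α * ww α n * (α-1) / ((n:ℝ)+1) := by
  have h1 : vv α (n+2) = Real.Gamma α * ww α (n+1) := rfl
  have h2 : vv α (n+1) = Real.Gamma α * ww α n := rfl
  have h3 : ww α (n+1) = ww α n * (α + (n:ℝ)) / ((n:ℝ)+1) := rfl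
  rw [h1, h2, h3]
  have : ((n:ℝ)+1) ≠ 0 := by positivity
  field_simp
  ring

include hα2

lemma ww_div_anti {i j : ℕ} (h : i ≤ j) :
    ww α j * ((i:ℝ)+1) ≤ ww α i * ((j:ℝ)+1) := by
  induction j with
  | zero => rw [Nat.le_zero.mp h]
  | succ j ih =>
    rcases Nat.lt_or_ge i (j+1) with h' | h'
    · have ihj := ih (by omega)
      have hpj := ww_pos hα1 (α := α) j
      have hpi := ww_pos hα1 (α := α) i
      have hi1 : (0:ℝ) < (i:ℝ)+1 := by positivity
      have hj1 : (0:ℝ) < (j:ℝ)+1 := by positivity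
      push_cast
      rw [show ww α (j+1) = ww α j * (α + (j:ℝ)) / ((j:ℝ)+1) from rfl]
      rw [div_mul_eq_mul_div, div_le_iff₀ hj1]
      have hαj : α + (j:ℝ) ≤ (j:ℝ) + 2 := by linarith
      have t1 := mul_le_mul_of_nonneg_right ihj (show (0:ℝ) ≤ α + j by linarith)
      have t2 := mul_le_mul_of_nonneg_left hαj
        (mul_nonneg (mul_nonneg hpi.le hj1.le) (by norm_num : (0:ℝ) ≤ 1))
      nlinarith [t1, t2]
    · rw [show i = j+1 by omega]

lemma ww_le (s : ℕ) : ww α s ≤ (s:ℝ) + 1 := by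
  have := ww_div_anti hα1 hα2 (Nat.zero_le s)
  simpa [ww] using this

omit hα2 in
lemma Afrac_mem (s : ℕ) :
    0 ≤ vv α (b+2-s) / vv α (b+3) ∧ vv α (b+2-s) / vv α (b+3) ≤ 1 := by
  have h3 : 0 < vv α (b+3) := vv_pos hα1 (b+2)
  constructor
  · exact div_nonneg (vv_nonneg hα1 _) (le_of_lt h3)
  · rw [div_le_one h3]
    exact vv_mono hα1 (by omega)

omit hα1 hα2 in
lemma Gj_bc0 (s : ℕ) : Gj α b s 0 = 0 := by
  unfold Gj
  rw [show (0 : ℕ) - (s+1) = 0 by omega, show vv α 0 = 0 from rfl]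
  ring

omit hα2 in
lemma Gj_bc1 {s : ℕ} (hs : s ≤ b+1) : Gj α b s (b+3) = 0 := by
  unfold Gj
  have h3 : vv α (b+3) ≠ 0 := ne_of_gt (vv_pos hα1 (b+2))
  rw [show b + 3 - (s+1) = b+2-s by omega]
  field_simp
  ring

lemma Gj_dec_key (s m : ℕ) :
    (vv α (s+m+2) - vv α (s+m+1)) * (vv α (b+2-s) / vv α (b+3))
      ≤ vv α (m+1) - vv α m := by
  have hΓ : 0 < Real.Gamma α := Real.Gamma_pos_of_pos (by linarith)
  have hA := Afrac_mem (α := α) (b := b) hα1 s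
  set A := vv α (b+2-s) / vv α (b+3) with hAdef
  cases m with
  | zero =>
    rw [show s + 0 + 2 = s + 2 by omega, show s + 0 + 1 = s + 1 by omega]
    rw [vv_diff hα1 s]
    rw [show vv α (0+1) = Real.Gamma α * ww α 0 from rfl,
      show ww α 0 = 1 from rfl, show vv α 0 = 0 from rfl]
    have hws := ww_le hα1 hα2 s
    have hwp := ww_pos hα1 (α := α) s
    have hs1 : (0:ℝ) < (s:ℝ)+1 := by positivity
    have hX : 0 ≤ Real.Gamma α * ww α s * (α-1) / ((s:ℝ)+1) := by
      have : (0:ℝ) ≤ α - 1 := by linarith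
      positivity
    have h1 : Real.Gamma α * ww α s * (α-1) / ((s:ℝ)+1) ≤ Real.Gamma α := by
      rw [div_le_iff₀ hs1]
      have t1 : Real.Gamma α * ww α s * (α-1) ≤ Real.Gamma α * ww α s * 1 :=
        mul_le_mul_of_nonneg_left (by linarith) (by positivity)
      have t2 : Real.Gamma α * ww α s ≤ Real.Gamma α * ((s:ℝ)+1) :=
        mul_le_mul_of_nonneg_left hws hΓ.le
      nlinarith [t1, t2]
    calc Real.Gamma α * ww α s * (α-1) / ((s:ℝ)+1) * A
        ≤ Real.Gamma α * ww α s * (α-1) / ((s:ℝ)+1) * 1 :=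
          mul_le_mul_of_nonneg_left hA.2 hX
      _ = Real.Gamma α * ww α s * (α-1) / ((s:ℝ)+1) := mul_one _
      _ ≤ Real.Gamma α * 1 - 0 := by rw [mul_one, sub_zero]; exact h1
  | succ m =>
    have e1 : vv α (s+(m+1)+2) - vv α (s+(m+1)+1)
        = Real.Gamma α * ww α (s+m+1) * (α-1) / (((s+m+1:ℕ):ℝ)+1) := by
      rw [show s+(m+1)+2 = (s+m+1)+2 by omega, show s+(m+1)+1 = (s+m+1)+1 by omega]
      exact vv_diff hα1 (s+m+1)
    have e2 : vv α ((m+1)+1) - vv α (m+1)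
        = Real.Gamma α * ww α m * (α-1) / ((m:ℝ)+1) := vv_diff hα1 m
    rw [e1, e2]
    have hphi := ww_div_anti hα1 hα2 (show m ≤ s+m+1 by omega)
    have hα1' : (0:ℝ) ≤ α - 1 := by linarith
    have hsm : (0:ℝ) < ((s+m+1:ℕ):ℝ)+1 := by positivity
    have hm1 : (0:ℝ) < (m:ℝ)+1 := by positivity
    have hwsm := ww_pos hα1 (α := α) (s+m+1)
    have hX : 0 ≤ Real.Gamma α * ww α (s+m+1) * (α-1) / (((s+m+1:ℕ):ℝ)+1) := by positivity
    have key2 : Real.Gamma α * ww α (s+m+1) * (α-1) / (((s+m+1:ℕ):ℝ)+1)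
        ≤ Real.Gamma α * ww α m * (α-1) / ((m:ℝ)+1) := by
      rw [div_le_div_iff₀ hsm hm1]
      have t1 := mul_le_mul_of_nonneg_left hphi (mul_nonneg hΓ.le hα1')
      nlinarith [t1]
    calc Real.Gamma α * ww α (s+m+1) * (α-1) / (((s+m+1:ℕ):ℝ)+1) * A
        ≤ Real.Gamma α * ww α (s+m+1) * (α-1) / (((s+m+1:ℕ):ℝ)+1) * 1 :=
          mul_le_mul_of_nonneg_left hA.2 hX
      _ = Real.Gamma α * ww α (s+m+1) * (α-1) / (((s+m+1:ℕ):ℝ)+1) := mul_one _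
      _ ≤ Real.Gamma α * ww α m * (α-1) / ((m:ℝ)+1) := key2

lemma Gj_dec {s k : ℕ} (hk : s+1 ≤ k) : Gj α b s (k+1) ≤ Gj α b s k := by
  have hΓ : 0 < Real.Gamma α := Real.Gamma_pos_of_pos (by linarith)
  obtain ⟨m, rfl⟩ : ∃ m, k = s + 1 + m := ⟨k - (s+1), by omega⟩
  have key := Gj_dec_key (α := α) (b := b) hα1 hα2 s m
  unfold Gj
  rw [show s + 1 + m + 1 - (s+1) = m + 1 by omega, show s + 1 + m - (s+1) = m by omega]
  rw [show s + 1 + m + 1 = s + m + 2 by omega, show s + 1 + m = s + m + 1 by omega]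
  have hΓinv : (0:ℝ) ≤ 1/Real.Gamma α := by positivity
  set A := vv α (b+2-s) / vv α (b+3)
  have h' : vv α (s+m+2) * A - vv α (m+1) ≤ vv α (s+m+1) * A - vv α m := by nlinarith [key]
  exact mul_le_mul_of_nonneg_left h' hΓinv

lemma Gj_chain {s : ℕ} (n : ℕ) : ∀ k, s+1 ≤ k → Gj α b s (k+n) ≤ Gj α b s k := by
  induction n with
  | zero => intro k _; exact le_refl _
  | succ n ih =>
    intro k hk
    calc Gj α b s (k+(n+1)) = Gj α b s ((k+n)+1) := by rw [show k+(n+1) = (k+n)+1 by omega]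
      _ ≤ Gj α b s (k+n) := Gj_dec hα1 hα2 (by omega)
      _ ≤ Gj α b s k := ih k hk

lemma Gj_nonneg {s k : ℕ} (hs : s ≤ b+1) (hk : k ≤ b+3) : 0 ≤ Gj α b s k := by
  have hΓ : 0 < Real.Gamma α := Real.Gamma_pos_of_pos (by linarith)
  have hA := Afrac_mem (α := α) (b := b) hα1 s
  rcases Nat.lt_or_ge k (s+1) with h | h
  · unfold Gj
    rw [show k - (s+1) = 0 by omega, show vv α 0 = 0 from rfl, sub_zero]
    have hvk := vv_nonneg hα1 (α := α) k
    have hΓinv : (0:ℝ) ≤ 1/Real.Gamma α := by positivity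
    exact mul_nonneg hΓinv (mul_nonneg hvk hA.1)
  · have := Gj_chain hα1 hα2 (b := b) (s := s) (b+3-k) k h
    rw [show k + (b+3-k) = b+3 by omega] at this
    rw [Gj_bc1 hα1 hs] at this
    exact this

lemma Gj_le_diag {s k : ℕ} (hs : s ≤ b+1) : Gj α b s k ≤ Gj α b s (s+1) := by
  have hΓ : 0 < Real.Gamma α := Real.Gamma_pos_of_pos (by linarith)
  have hA := Afrac_mem (α := α) (b := b) hα1 s
  rcases Nat.lt_or_ge k (s+1) with h | h
  · unfold Gj
    rw [show k - (s+1) = 0 by omega, show (s+1) - (s+1) = 0 by omega,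
      show vv α 0 = 0 from rfl, sub_zero, sub_zero]
    have hm := vv_mono hα1 (α := α) (show k ≤ s+1 by omega)
    have hΓinv : (0:ℝ) ≤ 1/Real.Gamma α := by positivity
    exact mul_le_mul_of_nonneg_left (mul_le_mul_of_nonneg_right hm hA.1) hΓinv
  · have := Gj_chain hα1 hα2 (b := b) (s := s) (k - (s+1)) (s+1) (le_refl _)
    rw [show s + 1 + (k - (s+1)) = k by omega] at this
    exact this

lemma Gj_zero_le (k : ℕ) (hb : 1 ≤ b) : Gj α b 0 k ≤ Gj α b 1 2 := by
  have hΓ : 0 < Real.Gamma α := Real.Gamma_pos_of_pos (by linarith)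
  have h3 : 0 < vv α (b+3) := vv_pos hα1 (b+2)
  have step1 : Gj α b 0 k ≤ Gj α b 0 1 := Gj_le_diag hα1 hα2 (by omega)
  refine le_trans step1 ?_
  unfold Gj
  rw [show vv α 0 = 0 from rfl, sub_zero, sub_zero,
    show b+2-0 = b+2 by omega]
  rw [vv_one]
  have hv2 : vv α 2 = Real.Gamma α * α := by
    show Real.Gamma α * ww α 1 = _
    norm_num [ww]
  rw [hv2, show b+2-1 = b+1 by omega]
  -- goal: (1/Γ) * (Γ * (vv (b+2)/vv (b+3))) ≤ (1/Γ) * (Γ*α * (vv (b+1)/vv(b+3)))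
  have hkey : vv α (b+2) ≤ α * vv α (b+1) := by
    have e1 : vv α (b+2) = Real.Gamma α * ww α (b+1) := rfl
    have e2 : vv α (b+1) = Real.Gamma α * ww α b := rfl
    have e3 : ww α (b+1) = ww α b * (α + (b:ℝ))/((b:ℝ)+1) := rfl
    rw [e1, e2, e3]
    have hwb := ww_pos hα1 (α := α) b
    have hb1 : (0:ℝ) < (b:ℝ)+1 := by positivity
    rw [← mul_div_assoc, div_le_iff₀ hb1]
    have hbr : (1:ℝ) ≤ (b:ℝ) := by exact_mod_cast hb
    have hstep : α + (b:ℝ) ≤ α * ((b:ℝ)+1) := by nlinarith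
    have t := mul_le_mul_of_nonneg_left hstep (mul_nonneg hΓ.le hwb.le)
    nlinarith [t]
  have hΓinv : (0:ℝ) ≤ 1/Real.Gamma α := by positivity
  apply mul_le_mul_of_nonneg_left _ hΓinv
  calc Real.Gamma α * (vv α (b+2) / vv α (b+3))
      = (Real.Gamma α / vv α (b+3)) * vv α (b+2) := by ring
    _ ≤ (Real.Gamma α / vv α (b+3)) * (α * vv α (b+1)) := by
        apply mul_le_mul_of_nonneg_left hkey (by positivity)
    _ = Real.Gamma α * α * (vv α (b+1) / vv α (b+3)) := by ring

end green


section assemble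
variable {b : ℕ} (hα1 : 1 < α) (hα2 : α ≤ 2)

lemma fracSum_smul (c : ℝ) (u : ℕ → ℝ) (n : ℕ) :
    fracSum α (fun k => c * u k) n = c * fracSum α u n := by
  have := fracSum_linear (α := α) c 0 u u n
  simp only [zero_mul, add_zero] at this
  rw [this]

lemma fracDiff_smul (c : ℝ) (u : ℕ → ℝ) (t : ℕ) :
    fracDiff α (fun k => c * u k) t = c * fracDiff α u t := by
  unfold fracDiff
  rw [fracSum_smul, fracSum_smul, fracSum_smul]
  ring

include hα1 hα2

lemma Gj_fracDiff (s t : ℕ) :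
    fracDiff α (Gj α b s) t = -(if t = s then 1 else 0) := by
  have hΓ : 0 < Real.Gamma α := Real.Gamma_pos_of_pos (by linarith)
  have hfun : Gj α b s = fun k =>
      (vv α (b+2-s) / vv α (b+3) * (1/Real.Gamma α)) * vv α k
        + (-(1/Real.Gamma α)) * vv α (k - (s+1)) := by
    funext k
    unfold Gj
    ring
  rw [hfun, fracDiff_linear, fracDiff_vv hα1 hα2, fracDiff_ramp hα1 hα2]
  split_ifs with h
  · field_simp
    ring
  · ring

lemma G_diag_eq {s : ℕ} (hs : s ≤ b+1) :
    G α b ((s:ℝ) + α - 1) s = Gj α b s (s+1) := by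
  unfold G
  rw [if_pos (by linarith [show (s:ℝ) + α - 1 - α + 1 = (s:ℝ) by ring] : (s:ℝ) ≤ (s:ℝ) + α - 1 - α + 1)]
  have e1 : fp ((s:ℝ) + α - 1) (α - 1) = vv α (s+1) := by
    rw [vv_eq_fp hα1 (s+1)]
    congr 1
    push_cast; ring
  have e2 : fp (α + (b:ℝ) - (s:ℝ)) (α - 1) = vv α (b+2-s) := by
    rw [vv_eq_fp hα1 (b+2-s)]
    congr 1
    rw [Nat.cast_sub (by omega)]
    push_cast; ring
  have e3 : fp (α + (b:ℝ) + 1) (α - 1) = vv α (b+3) := by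
    rw [vv_eq_fp hα1 (b+3)]
    congr 1
    push_cast; ring
  have e4 : fp ((s:ℝ) + α - 1 - (s:ℝ) - 1) (α - 1) = 0 := by
    have := vv_eq_fp hα1 (α := α) 0
    rw [show ((s:ℝ) + α - 1 - (s:ℝ) - 1) = α - 2 + ((0:ℕ):ℝ) by push_cast; ring]
    rw [← this]
    rfl
  rw [e1, e2, e3, e4]
  unfold Gj
  rw [show s + 1 - (s+1) = 0 by omega, show vv α 0 = 0 from rfl]
  rw [mul_div_assoc]

end assemble


/-- If the discrete fractional BVP has a nontrivial (nonnegative) solution `y`,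
then `η ≤ M·f(η)·Σ_{s=0}^{b+1} |q(s+α-1)|`, where
`η = max_{s ∈ {0,…,b+1}} y(s+α-1)` and `M = max_{s ∈ {1,…,b+1}} G(s+α-1,s)`.
Here `y k` stands for `y(α-2+k)` and `q s` stands for `q(α-1+s)`. -/
theorem statement11 (α : ℝ) (b : ℕ) (hα1 : 1 < α) (hα2 : α ≤ 2) (hb : 2 ≤ b)
    (q : ℕ → ℝ) (f : ℝ → ℝ)
    (hf0 : ∀ x : ℝ, 0 ≤ x → 0 ≤ f x) (hfmono : MonotoneOn f (Set.Ici (0 : ℝ)))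
    (y : ℕ → ℝ) (hy0 : ∀ k : ℕ, k ≤ b + 3 → 0 ≤ y k)
    (hynt : ∃ k : ℕ, k ≤ b + 3 ∧ y k ≠ 0)
    (hbvp : ∀ t : ℕ, t ≤ b + 1 → fracDiff α y t + q t * f (y (t + 1)) = 0)
    (hbc0 : y 0 = 0) (hbc1 : y (b + 3) = 0) :
    (Finset.range (b + 2)).sup' (Finset.nonempty_range_iff.mpr (by omega))
        (fun s => y (s + 1)) ≤
      ((Finset.Icc 1 (b + 1)).sup' (Finset.nonempty_Icc.mpr (by omega))
          (fun s => G α b ((s : ℝ) + α - 1) s)) *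
        f ((Finset.range (b + 2)).sup' (Finset.nonempty_range_iff.mpr (by omega))
          (fun s => y (s + 1))) *
        ∑ s ∈ Finset.range (b + 2), |q s| := by
  have hΓ : 0 < Real.Gamma α := Real.Gamma_pos_of_pos (by linarith)
  set h : ℕ → ℝ := fun s => q s * f (y (s+1)) with hh
  set Y : ℕ → ℝ := fun k => ∑ s ∈ Finset.range (b+2), h s * Gj α b s k with hY
  -- Y solves the same BVP
  have hYd : ∀ t : ℕ, t ≤ b+1 → fracDiff α Y t = -(h t) := by
    intro t ht
    rw [hY]
    rw [fracDiff_finsum (Finset.range (b+2)) (fun s k => h s * Gj α b s k) t]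
    have hc : ∀ s ∈ Finset.range (b+2),
        fracDiff α (fun k => h s * Gj α b s k) t
          = (if s = t then -(h s) else 0) := by
      intro s hs
      rw [fracDiff_smul, Gj_fracDiff hα1 hα2]
      by_cases hst : s = t
      · subst hst; rw [if_pos rfl, if_pos rfl]; ring
      · rw [if_neg hst, if_neg (fun hts => hst hts.symm)]; ring
    rw [Finset.sum_congr rfl hc, Finset.sum_ite_eq' (Finset.range (b+2)) t (fun s => -(h s))]
    rw [if_pos (Finset.mem_range.mpr (by omega))]
  have hY0 : Y 0 = 0 := by
    rw [hY]
    apply Finset.sum_eq_zero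
    intro s _
    rw [Gj_bc0, mul_zero]
  have hY1 : Y (b+3) = 0 := by
    rw [hY]
    apply Finset.sum_eq_zero
    intro s hs
    rw [Finset.mem_range] at hs
    rw [Gj_bc1 hα1 (by omega), mul_zero]
  -- uniqueness: y = Y on [0, b+3]
  set u : ℕ → ℝ := fun k => y k - Y k with hu
  have hud : ∀ t : ℕ, t + 2 ≤ b + 3 → fracDiff α u t = 0 := by
    intro t ht
    have hfun : u = fun k => 1 * y k + (-1) * Y k := by funext k; rw [hu]; ring
    rw [hfun, fracDiff_linear, hYd t (by omega)]
    have := hbvp t (by omega)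
    rw [hh]
    simp only
    linarith [this]
  have hrep := homog_sol hα1 hα2 u (b+3) (by rw [hu]; simp only; rw [hbc0, hY0]; ring) hud
  have hu1 : u 1 / Real.Gamma α = 0 := by
    have hend := hrep (b+3) (le_refl _)
    have : u (b+3) = 0 := by rw [hu]; simp only; rw [hbc1, hY1]; ring
    rw [this] at hend
    have hv : vv α (b+3) ≠ 0 := ne_of_gt (vv_pos hα1 (b+2))
    rcases mul_eq_zero.mp hend.symm with h' | h'
    · exact h'
    · exact absurd h' hv
  have hyY : ∀ k, k ≤ b+3 → y k = Y k := by
    intro k hk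
    have := hrep k hk
    rw [hu1, zero_mul] at this
    rw [hu] at this
    simp only at this
    linarith [this]
  -- the maximum point
  set η := (Finset.range (b + 2)).sup' (Finset.nonempty_range_iff.mpr (by omega))
      (fun s => y (s + 1)) with hη
  obtain ⟨s₀, hs₀mem, hs₀⟩ := Finset.exists_mem_eq_sup' (Finset.nonempty_range_iff.mpr
    (by omega : b + 2 ≠ 0)) (fun s => y (s + 1))
  rw [Finset.mem_range] at hs₀mem
  have hηy : η = y (s₀ + 1) := hs₀
  have hη0 : 0 ≤ η := by
    rw [hηy]
    exact hy0 (s₀+1) (by omega)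
  set M := ((Finset.Icc 1 (b + 1)).sup' (Finset.nonempty_Icc.mpr (by omega))
      (fun s => G α b ((s : ℝ) + α - 1) s)) with hM
  -- Gj bound by M
  have hGM : ∀ s, s ≤ b+1 → Gj α b s (s₀+1) ≤ M := by
    intro s hs
    rcases Nat.eq_zero_or_pos s with h0 | hpos
    · subst h0
      calc Gj α b 0 (s₀+1) ≤ Gj α b 1 2 := Gj_zero_le hα1 hα2 (s₀+1) (by omega)
        _ = G α b (((1:ℕ):ℝ) + α - 1) 1 := by
            rw [G_diag_eq hα1 hα2 (by omega : (1:ℕ) ≤ b+1)]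
        _ ≤ M := by
            rw [hM]
            exact Finset.le_sup' (fun s : ℕ => G α b ((s : ℝ) + α - 1) s)
              (Finset.mem_Icc.mpr (⟨le_refl 1, by omega⟩ : 1 ≤ (1:ℕ) ∧ (1:ℕ) ≤ b+1))
    · calc Gj α b s (s₀+1) ≤ Gj α b s (s+1) := Gj_le_diag hα1 hα2 (by omega)
        _ = G α b ((s:ℝ) + α - 1) s := (G_diag_eq hα1 hα2 hs).symm
        _ ≤ M := by
            rw [hM]
            exact Finset.le_sup' (fun s : ℕ => G α b ((s : ℝ) + α - 1) s)
              (Finset.mem_Icc.mpr ⟨hpos, hs⟩)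
  have hM0 : 0 ≤ M := by
    refine le_trans (Gj_nonneg hα1 hα2 (show (1:ℕ) ≤ b+1 by omega) (show 2 ≤ b+3 by omega)) ?_
    calc Gj α b 1 2 = G α b (((1:ℕ):ℝ) + α - 1) 1 :=
          (G_diag_eq hα1 hα2 (by omega : (1:ℕ) ≤ b+1)).symm
      _ ≤ M := by
          rw [hM]
          exact Finset.le_sup' (fun s : ℕ => G α b ((s : ℝ) + α - 1) s)
            (Finset.mem_Icc.mpr (⟨le_refl 1, by omega⟩ : 1 ≤ (1:ℕ) ∧ (1:ℕ) ≤ b+1))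
  -- final estimate
  have hrepη : η = ∑ s ∈ Finset.range (b+2), h s * Gj α b s (s₀+1) := by
    rw [hηy, hyY (s₀+1) (by omega), hY]
  have hterm : ∀ s ∈ Finset.range (b+2),
      h s * Gj α b s (s₀+1) ≤ (M * f η) * |q s| := by
    intro s hs
    rw [Finset.mem_range] at hs
    have hGpos : 0 ≤ Gj α b s (s₀+1) := Gj_nonneg hα1 hα2 (by omega) (by omega)
    have hfy : 0 ≤ f (y (s+1)) := hf0 _ (hy0 (s+1) (by omega))
    have hfη : f (y (s+1)) ≤ f η := by
      apply hfmono (Set.mem_Ici.mpr (hy0 (s+1) (by omega))) (Set.mem_Ici.mpr hη0)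
      rw [hη]
      exact Finset.le_sup' (fun s => y (s+1)) (Finset.mem_range.mpr hs)
    have hfη0 : 0 ≤ f η := le_trans hfy hfη
    have hq : q s ≤ |q s| := le_abs_self (q s)
    have hGM' := hGM s (by omega)
    calc h s * Gj α b s (s₀+1) = q s * f (y (s+1)) * Gj α b s (s₀+1) := by rw [hh]
      _ ≤ |q s| * f (y (s+1)) * Gj α b s (s₀+1) := by
          apply mul_le_mul_of_nonneg_right (mul_le_mul_of_nonneg_right hq hfy) hGpos
      _ ≤ |q s| * f η * Gj α b s (s₀+1) := by
          apply mul_le_mul_of_nonneg_right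
            (mul_le_mul_of_nonneg_left hfη (abs_nonneg (q s))) hGpos
      _ ≤ |q s| * f η * M := by
          apply mul_le_mul_of_nonneg_left hGM'
            (mul_nonneg (abs_nonneg (q s)) hfη0)
      _ = (M * f η) * |q s| := by ring
  calc η = ∑ s ∈ Finset.range (b+2), h s * Gj α b s (s₀+1) := hrepη
    _ ≤ ∑ s ∈ Finset.range (b+2), (M * f η) * |q s| := Finset.sum_le_sum hterm
    _ = M * f η * ∑ s ∈ Finset.range (b+2), |q s| := by rw [← Finset.mul_sum]
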